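/- arXiv:0707.1958 — 2 statements merged into one kernel-verified Lean document; each statement's English description precedes it below -/
import Mathlib

section
/- Let r : ℝⁿ → ℝ be defined on the positive orthant by r(x) = (x₁^p + ⋯ + xₙ^p)^{1/p} for a real constant p > 0. Then for any real m, the function u(x) = r(x)^m satisfies L u = β(m) · u, where L u = Σᵢ (r/xᵢ)^p [xᵢ² ∂²u/∂xᵢ² + αᵢ xᵢ ∂u/∂xᵢ] + λ u and β(m) = m(m + 2φ) + λ with 2φ = -p + n(p-1) + Σᵢ αᵢ. -/
open Real Set

/-- Partial derivative in the `i`-th coordinate. -/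
noncomputable def pd {n : ℕ} (i : Fin n) (u : (Fin n → ℝ) → ℝ) (x : Fin n → ℝ) : ℝ :=
  deriv (fun t => u (Function.update x i t)) (x i)

/-- `r x = (x₁^p + ⋯ + xₙ^p)^(1/p)`. -/
noncomputable def rad {n : ℕ} (p : ℝ) (x : Fin n → ℝ) : ℝ :=
  (∑ i, x i ^ p) ^ (1 / p)

/-- The singular operator `L`. -/
noncomputable def Lop {n : ℕ} (p : ℝ) (α : Fin n → ℝ) (lam : ℝ)
    (u : (Fin n → ℝ) → ℝ) : (Fin n → ℝ) → ℝ :=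
  fun x => (∑ i, (rad p x / x i) ^ p *
      ((x i) ^ 2 * pd i (fun y => pd i u y) x + α i * x i * pd i u x)) + lam * u x

section helpers

variable {n : ℕ}

lemma sum_update (p : ℝ) (x : Fin n → ℝ) (i : Fin n) (t : ℝ) :
    ∑ j, Function.update x i t j ^ p
      = t ^ p + ∑ j ∈ Finset.univ.erase i, x j ^ p := by
  have h : (fun j => Function.update x i t j ^ p)
      = Function.update (fun j => x j ^ p) i (t ^ p) := by
    funext j
    rcases eq_or_ne j i with h | h <;> simp [Function.update_apply, h]
  rw [h, Finset.sum_update_of_mem (Finset.mem_univ i), Finset.sdiff_singleton_eq_erase]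

lemma hasD1 (hp : 0 < p) (m c : ℝ) (hc : 0 ≤ c) {t : ℝ} (ht : 0 < t) :
    HasDerivAt (fun t : ℝ => (t ^ p + c) ^ (m / p))
      (m * (t ^ p + c) ^ (m / p - 1) * t ^ (p - 1)) t := by
  have hbase : (0:ℝ) < t ^ p + c := by positivity
  have h1 : HasDerivAt (fun t : ℝ => t ^ p + c) (p * t ^ (p - 1)) t :=
    (Real.hasDerivAt_rpow_const (Or.inl ht.ne')).add_const c
  have h2 := h1.rpow_const (p := m / p) (Or.inl hbase.ne')
  convert h2 using 1
  field_simp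

lemma hasD2 (hp : 0 < p) (m c : ℝ) (hc : 0 ≤ c) {t : ℝ} (ht : 0 < t) :
    HasDerivAt (fun t : ℝ => m * (t ^ p + c) ^ (m / p - 1) * t ^ (p - 1))
      (m * ((m / p - 1) * (t ^ p + c) ^ (m / p - 2) * (p * t ^ (p - 1))) * t ^ (p - 1)
        + m * (t ^ p + c) ^ (m / p - 1) * ((p - 1) * t ^ (p - 2))) t := by
  have hbase : (0:ℝ) < t ^ p + c := by positivity
  have h1 : HasDerivAt (fun t : ℝ => t ^ p + c) (p * t ^ (p - 1)) t :=
    (Real.hasDerivAt_rpow_const (Or.inl ht.ne')).add_const c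
  have h3 := (h1.rpow_const (p := m / p - 1) (Or.inl hbase.ne')).const_mul m
  have h4 := Real.hasDerivAt_rpow_const (p := p - 1) (x := t) (Or.inl ht.ne')
  have h5 := h3.mul h4
  refine h5.congr_deriv ?_
  have e1 : m / p - 1 - 1 = m / p - 2 := by ring
  have e2 : p - 1 - 1 = p - 2 := by ring
  rw [e1, e2]
  ring

lemma ev_eq (hp : 0 < p) (m : ℝ) (x : Fin n → ℝ) (hx : ∀ j, 0 < x j) (i : Fin n) :
    (fun t => rad p (Function.update x i t) ^ m)
      =ᶠ[nhds (x i)] fun t => (t ^ p + ∑ j ∈ Finset.univ.erase i, x j ^ p) ^ (m / p) := by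
  filter_upwards [Ioi_mem_nhds (hx i)] with t ht
  have hS : (0:ℝ) ≤ t ^ p + ∑ j ∈ Finset.univ.erase i, x j ^ p := by
    have : (0:ℝ) < t ^ p := Real.rpow_pos_of_pos ht p
    have h2 : (0:ℝ) ≤ ∑ j ∈ Finset.univ.erase i, x j ^ p :=
      Finset.sum_nonneg fun j _ => (Real.rpow_pos_of_pos (hx j) p).le
    linarith
  rw [rad, sum_update, ← Real.rpow_mul hS, one_div_mul_eq_div]

lemma pd_formula (hp : 0 < p) (m : ℝ) (y : Fin n → ℝ) (hy : ∀ j, 0 < y j) (i : Fin n) :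
    pd i (fun z => rad p z ^ m) y
      = m * (∑ j, y j ^ p) ^ (m / p - 1) * (y i) ^ (p - 1) := by
  set c := ∑ j ∈ Finset.univ.erase i, y j ^ p with hcdef
  have hc : 0 ≤ c := Finset.sum_nonneg fun j _ => (Real.rpow_pos_of_pos (hy j) p).le
  have hS : ∑ j, y j ^ p = y i ^ p + c := by
    rw [← sum_update p y i (y i), Function.update_eq_self]
  rw [pd, (ev_eq hp m y hy i).deriv_eq, (hasD1 hp m c hc (hy i)).deriv, hS]

lemma pd2_formula (hp : 0 < p) (m : ℝ) (x : Fin n → ℝ) (hx : ∀ j, 0 < x j) (i : Fin n) :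
    pd i (fun y => pd i (fun z => rad p z ^ m) y) x
      = m * ((m / p - 1) * (∑ j, x j ^ p) ^ (m / p - 2) * (p * (x i) ^ (p - 1))) * (x i) ^ (p - 1)
        + m * (∑ j, x j ^ p) ^ (m / p - 1) * ((p - 1) * (x i) ^ (p - 2)) := by
  set c := ∑ j ∈ Finset.univ.erase i, x j ^ p with hcdef
  have hc : 0 ≤ c := Finset.sum_nonneg fun j _ => (Real.rpow_pos_of_pos (hx j) p).le
  have hS : ∑ j, x j ^ p = x i ^ p + c := by
    rw [← sum_update p x i (x i), Function.update_eq_self]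
  have hev : (fun t => pd i (fun z => rad p z ^ m) (Function.update x i t))
      =ᶠ[nhds (x i)] fun t => m * (t ^ p + c) ^ (m / p - 1) * t ^ (p - 1) := by
    filter_upwards [Ioi_mem_nhds (hx i)] with t ht
    have hy : ∀ j, 0 < Function.update x i t j := by
      intro j
      rcases eq_or_ne j i with h | h
      · rw [h, Function.update_self]; exact ht
      · rw [Function.update_of_ne h]; exact hx j
    rw [pd_formula hp m _ hy i, sum_update, Function.update_self]
  rw [pd, hev.deriv_eq, (hasD2 hp m c hc (hx i)).deriv, hS]

end helpers

theorem stmt0 {n : ℕ} (hn : 0 < n) (p : ℝ) (hp : 0 < p) (α : Fin n → ℝ) (lam : ℝ) (m : ℝ)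
    (φ : ℝ) (hφ : 2 * φ = -p + n * (p - 1) + ∑ i, α i) :
    ∀ x : Fin n → ℝ, (∀ i, 0 < x i) →
      Lop p α lam (fun y => rad p y ^ m) x = (m * (m + 2 * φ) + lam) * rad p x ^ m := by
  intro x hx
  set S := ∑ j, x j ^ p with hSdef
  have hS : 0 < S := Finset.sum_pos (fun j _ => Real.rpow_pos_of_pos (hx j) p)
    (Finset.univ_nonempty_iff.mpr (Fin.pos_iff_nonempty.mp hn))
  have hradm : rad p x ^ m = S ^ (m / p) := by
    rw [rad, ← Real.rpow_mul hS.le, one_div_mul_eq_div]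
  have hradp : rad p x ^ p = S := by
    rw [rad, ← Real.rpow_mul hS.le, one_div_mul_cancel hp.ne', Real.rpow_one]
  have key : ∀ i : Fin n, (rad p x / x i) ^ p *
      ((x i) ^ 2 * pd i (fun y => pd i (fun z => rad p z ^ m) y) x
        + α i * x i * pd i (fun z => rad p z ^ m) x)
      = m * (m - p) * S ^ (m / p - 1) * x i ^ p
        + (m * (p - 1) + m * α i) * S ^ (m / p) := by
    intro i
    have ha : 0 < x i := hx i
    rw [pd_formula hp m x hx i, pd2_formula hp m x hx i,
      Real.div_rpow (show (0:ℝ) ≤ rad p x from Real.rpow_nonneg (Finset.sum_nonneg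
        fun j _ => (Real.rpow_pos_of_pos (hx j) p).le) _) ha.le, hradp]
    set a := x i with hadef
    set B := a ^ (p - 2) with hBdef
    have hB : 0 < B := Real.rpow_pos_of_pos ha _
    have hap1 : a ^ (p - 1) = B * a := by
      have h := Real.rpow_add ha (p - 2) 1
      rw [Real.rpow_one] at h
      rw [show p - 1 = p - 2 + 1 by ring, h]
    have hap : a ^ p = B * a * a := by
      have h := Real.rpow_add ha (p - 1) 1
      rw [Real.rpow_one] at h
      rw [show p = p - 1 + 1 by ring, h, hap1]
    set T := S ^ (m / p - 2) with hTdef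
    have hSm1 : S ^ (m / p - 1) = T * S := by
      have h := Real.rpow_add hS (m / p - 2) 1
      rw [Real.rpow_one] at h
      rw [show m / p - 1 = m / p - 2 + 1 by ring, h]
    have hSm : S ^ (m / p) = T * S * S := by
      have h := Real.rpow_add hS (m / p - 1) 1
      rw [Real.rpow_one] at h
      rw [show m / p = m / p - 1 + 1 by ring, h, hSm1]
    rw [hap1, hap, hSm1, hSm]
    field_simp
    ring
  have hSm1 : S ^ (m / p - 1) * S = S ^ (m / p) := by
    have h := Real.rpow_add hS (m / p - 1) 1
    rw [Real.rpow_one] at h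
    rw [← h]
    norm_num
  rw [Lop, Finset.sum_congr rfl (fun i _ => key i), Finset.sum_add_distrib,
    ← Finset.mul_sum, ← hSdef, mul_assoc, hSm1, ← Finset.sum_mul,
    Finset.sum_add_distrib, Finset.sum_const, Finset.card_univ, Fintype.card_fin,
    ← Finset.mul_sum, hradm, nsmul_eq_mul]
  linear_combination (-(m * S ^ (m / p))) * hφ
end

section
/- With E u = x² u'' + α x u' + λ u on (0,∞), φ = (α-1)/2, suppose λ - φ² > 0 and let ν = √(λ - φ²). Then for every positive integer k and every 0 ≤ l ≤ k−1, the functions x ↦ x^{-φ} cos(ν ln x)(ln x)^l and x ↦ x^{-φ} sin(ν ln x)(ln x)^l satisfy E^k u = 0 on (0,∞). -/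
open Real Set

/-- The Euler operator `E u = x² u'' + α x u' + λ u`. -/
noncomputable def Eul (α lam : ℝ) (u : ℝ → ℝ) : ℝ → ℝ :=
  fun x => x ^ 2 * deriv (deriv u) x + α * x * deriv u x + lam * u x

/-- The constant-coefficient operator obtained from `Eul` by `t = log x`. -/
noncomputable def Dop (α lam : ℝ) (v : ℝ → ℝ) : ℝ → ℝ :=
  fun t => deriv (deriv v) t + (α - 1) * deriv v t + lam * v t

noncomputable def fc (φ ν : ℝ) (l : ℕ) : ℝ → ℝ :=
  fun t => Real.exp (-φ * t) * Real.cos (ν * t) * t ^ l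

noncomputable def fs (φ ν : ℝ) (l : ℕ) : ℝ → ℝ :=
  fun t => Real.exp (-φ * t) * Real.sin (ν * t) * t ^ l

lemma contDiff_fc (φ ν : ℝ) (l : ℕ) : ContDiff ℝ (⊤ : ℕ∞) (fc φ ν l) := by
  unfold fc
  exact ((Real.contDiff_exp.comp (contDiff_const.mul contDiff_id)).mul
    (Real.contDiff_cos.comp (contDiff_const.mul contDiff_id))).mul (contDiff_id.pow l)

lemma contDiff_fs (φ ν : ℝ) (l : ℕ) : ContDiff ℝ (⊤ : ℕ∞) (fs φ ν l) := by
  unfold fs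
  exact ((Real.contDiff_exp.comp (contDiff_const.mul contDiff_id)).mul
    (Real.contDiff_sin.comp (contDiff_const.mul contDiff_id))).mul (contDiff_id.pow l)

lemma hasDerivAt_fc (φ ν : ℝ) (l : ℕ) (t : ℝ) :
    HasDerivAt (fc φ ν l)
      (-φ * fc φ ν l t - ν * fs φ ν l t + l * fc φ ν (l - 1) t) t := by
  have h0 : HasDerivAt (fun t : ℝ => -φ * t) (-φ * 1) t := (hasDerivAt_id t).const_mul (-φ)
  have h1 : HasDerivAt (fun t : ℝ => ν * t) (ν * 1) t := (hasDerivAt_id t).const_mul ν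
  have : HasDerivAt (fun x => Real.exp (-φ * x) * Real.cos (ν * x) * x ^ l) _ t :=
    (h0.exp.mul h1.cos).mul (hasDerivAt_pow l t)
  simp only [fc, fs]
  show HasDerivAt (fun x => Real.exp (-φ * x) * Real.cos (ν * x) * x ^ l) _ t
  convert this using 1
  simp only [Pi.mul_apply]
  ring

lemma hasDerivAt_fs (φ ν : ℝ) (l : ℕ) (t : ℝ) :
    HasDerivAt (fs φ ν l)
      (-φ * fs φ ν l t + ν * fc φ ν l t + l * fs φ ν (l - 1) t) t := by
  have h0 : HasDerivAt (fun t : ℝ => -φ * t) (-φ * 1) t := (hasDerivAt_id t).const_mul (-φ)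
  have h1 : HasDerivAt (fun t : ℝ => ν * t) (ν * 1) t := (hasDerivAt_id t).const_mul ν
  have : HasDerivAt (fun x => Real.exp (-φ * x) * Real.sin (ν * x) * x ^ l) _ t :=
    (h0.exp.mul h1.sin).mul (hasDerivAt_pow l t)
  simp only [fc, fs]
  show HasDerivAt (fun x => Real.exp (-φ * x) * Real.sin (ν * x) * x ^ l) _ t
  convert this using 1
  simp only [Pi.mul_apply]
  ring

lemma deriv_fc (φ ν : ℝ) (l : ℕ) :
    deriv (fc φ ν l) = fun t => -φ * fc φ ν l t - ν * fs φ ν l t + l * fc φ ν (l - 1) t :=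
  funext fun t => (hasDerivAt_fc φ ν l t).deriv

lemma deriv_fs (φ ν : ℝ) (l : ℕ) :
    deriv (fs φ ν l) = fun t => -φ * fs φ ν l t + ν * fc φ ν l t + l * fs φ ν (l - 1) t :=
  funext fun t => (hasDerivAt_fs φ ν l t).deriv

lemma Dop_fc (α lam φ ν : ℝ) (hα : α = 2 * φ + 1) (hlam : lam = φ ^ 2 + ν ^ 2) (l : ℕ) :
    Dop α lam (fc φ ν l)
      = fun t => (l : ℝ) * ((l - 1 : ℕ) : ℝ) * fc φ ν (l - 2) t
          + (-(2 * l * ν)) * fs φ ν (l - 1) t := by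
  subst hα hlam
  funext t
  have h2 : HasDerivAt (fun s => -φ * fc φ ν l s - ν * fs φ ν l s + (l : ℝ) * fc φ ν (l - 1) s)
      (-φ * (-φ * fc φ ν l t - ν * fs φ ν l t + l * fc φ ν (l - 1) t)
        - ν * (-φ * fs φ ν l t + ν * fc φ ν l t + l * fs φ ν (l - 1) t)
        + (l : ℝ) * (-φ * fc φ ν (l - 1) t - ν * fs φ ν (l - 1) t
            + ((l - 1 : ℕ) : ℝ) * fc φ ν (l - 1 - 1) t)) t :=
    (((hasDerivAt_fc φ ν l t).const_mul (-φ)).sub ((hasDerivAt_fs φ ν l t).const_mul ν)).add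
      ((hasDerivAt_fc φ ν (l - 1) t).const_mul (l : ℝ))
  have hdd : deriv (deriv (fc φ ν l)) t
      = -φ * (-φ * fc φ ν l t - ν * fs φ ν l t + l * fc φ ν (l - 1) t)
        - ν * (-φ * fs φ ν l t + ν * fc φ ν l t + l * fs φ ν (l - 1) t)
        + (l : ℝ) * (-φ * fc φ ν (l - 1) t - ν * fs φ ν (l - 1) t
            + ((l - 1 : ℕ) : ℝ) * fc φ ν (l - 1 - 1) t) := by
    rw [deriv_fc]; exact h2.deriv
  have hsub : l - 1 - 1 = l - 2 := by omega
  simp only [Dop]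
  rw [hdd, (hasDerivAt_fc φ ν l t).deriv, hsub]
  ring

lemma Dop_fs (α lam φ ν : ℝ) (hα : α = 2 * φ + 1) (hlam : lam = φ ^ 2 + ν ^ 2) (l : ℕ) :
    Dop α lam (fs φ ν l)
      = fun t => (l : ℝ) * ((l - 1 : ℕ) : ℝ) * fs φ ν (l - 2) t
          + (2 * l * ν) * fc φ ν (l - 1) t := by
  subst hα hlam
  funext t
  have h2 : HasDerivAt (fun s => -φ * fs φ ν l s + ν * fc φ ν l s + (l : ℝ) * fs φ ν (l - 1) s)
      (-φ * (-φ * fs φ ν l t + ν * fc φ ν l t + l * fs φ ν (l - 1) t)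
        + ν * (-φ * fc φ ν l t - ν * fs φ ν l t + l * fc φ ν (l - 1) t)
        + (l : ℝ) * (-φ * fs φ ν (l - 1) t + ν * fc φ ν (l - 1) t
            + ((l - 1 : ℕ) : ℝ) * fs φ ν (l - 1 - 1) t)) t :=
    (((hasDerivAt_fs φ ν l t).const_mul (-φ)).add ((hasDerivAt_fc φ ν l t).const_mul ν)).add
      ((hasDerivAt_fs φ ν (l - 1) t).const_mul (l : ℝ))
  have hdd : deriv (deriv (fs φ ν l)) t
      = -φ * (-φ * fs φ ν l t + ν * fc φ ν l t + l * fs φ ν (l - 1) t)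
        + ν * (-φ * fc φ ν l t - ν * fs φ ν l t + l * fc φ ν (l - 1) t)
        + (l : ℝ) * (-φ * fs φ ν (l - 1) t + ν * fc φ ν (l - 1) t
            + ((l - 1 : ℕ) : ℝ) * fs φ ν (l - 1 - 1) t) := by
    rw [deriv_fs]; exact h2.deriv
  have hsub : l - 1 - 1 = l - 2 := by omega
  simp only [Dop]
  rw [hdd, (hasDerivAt_fs φ ν l t).deriv, hsub]
  ring

lemma Dop_contDiff (α lam : ℝ) {v : ℝ → ℝ} (hv : ContDiff ℝ (⊤ : ℕ∞) v) :
    ContDiff ℝ (⊤ : ℕ∞) (Dop α lam v) := by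
  have h1 : ContDiff ℝ (⊤ : ℕ∞) (deriv v) := (contDiff_infty_iff_deriv.mp hv).2
  have h2 : ContDiff ℝ (⊤ : ℕ∞) (deriv (deriv v)) := (contDiff_infty_iff_deriv.mp h1).2
  exact (h2.add (contDiff_const.mul h1)).add (contDiff_const.mul hv)

lemma Dop_iter_contDiff (α lam : ℝ) (k : ℕ) {v : ℝ → ℝ} (hv : ContDiff ℝ (⊤ : ℕ∞) v) :
    ContDiff ℝ (⊤ : ℕ∞) ((Dop α lam)^[k] v) := by
  induction k with
  | zero => exact hv
  | succ k IH => rw [Function.iterate_succ_apply']; exact Dop_contDiff α lam IH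

lemma Dop_lin (α lam : ℝ) {u w : ℝ → ℝ} (hu : ContDiff ℝ (⊤ : ℕ∞) u) (hw : ContDiff ℝ (⊤ : ℕ∞) w)
    (a b : ℝ) :
    Dop α lam (fun t => a * u t + b * w t)
      = fun t => a * Dop α lam u t + b * Dop α lam w t := by
  have hu1 : Differentiable ℝ u := hu.differentiable (by norm_num)
  have hu' : ContDiff ℝ (⊤ : ℕ∞) (deriv u) := (contDiff_infty_iff_deriv.mp hu).2
  have hu'1 : Differentiable ℝ (deriv u) := hu'.differentiable (by norm_num)
  have hw1 : Differentiable ℝ w := hw.differentiable (by norm_num)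
  have hw' : ContDiff ℝ (⊤ : ℕ∞) (deriv w) := (contDiff_infty_iff_deriv.mp hw).2
  have hw'1 : Differentiable ℝ (deriv w) := hw'.differentiable (by norm_num)
  have hd : deriv (fun t => a * u t + b * w t) = fun t => a * deriv u t + b * deriv w t :=
    funext fun t => (((hu1 t).hasDerivAt.const_mul a).add ((hw1 t).hasDerivAt.const_mul b)).deriv
  funext t
  have hd2 : deriv (fun t => a * deriv u t + b * deriv w t) t
      = a * deriv (deriv u) t + b * deriv (deriv w) t :=
    (((hu'1 t).hasDerivAt.const_mul a).add ((hw'1 t).hasDerivAt.const_mul b)).deriv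
  simp only [Dop, hd, hd2]
  ring

lemma Dop_iter_lin (α lam : ℝ) (k : ℕ) :
    ∀ (a b : ℝ) (u w : ℝ → ℝ), ContDiff ℝ (⊤ : ℕ∞) u → ContDiff ℝ (⊤ : ℕ∞) w →
      (Dop α lam)^[k] (fun t => a * u t + b * w t)
        = fun t => a * (Dop α lam)^[k] u t + b * (Dop α lam)^[k] w t := by
  induction k with
  | zero => intro a b u w _ _; rfl
  | succ k IH =>
    intro a b u w hu hw
    rw [Function.iterate_succ_apply, Function.iterate_succ_apply, Function.iterate_succ_apply,
      Dop_lin α lam hu hw a b, IH a b _ _ (Dop_contDiff α lam hu) (Dop_contDiff α lam hw)]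

lemma key (α lam φ ν : ℝ) (hα : α = 2 * φ + 1) (hlam : lam = φ ^ 2 + ν ^ 2) :
    ∀ k l, l < k → ∀ t : ℝ,
      (Dop α lam)^[k] (fc φ ν l) t = 0 ∧ (Dop α lam)^[k] (fs φ ν l) t = 0 := by
  intro k
  induction k with
  | zero => intro l hl; omega
  | succ k IH =>
    intro l hl t
    constructor
    · rw [Function.iterate_succ_apply, Dop_fc α lam φ ν hα hlam,
        Dop_iter_lin α lam k _ _ _ _ (contDiff_fc φ ν (l - 2)) (contDiff_fs φ ν (l - 1))]
      beta_reduce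
      rcases Nat.eq_zero_or_pos l with rfl | hpos
      · norm_num
      · rw [(IH (l - 1) (by omega) t).2]
        rcases Nat.lt_or_ge l 2 with h2 | h2
        · interval_cases l <;> norm_num
        · rw [(IH (l - 2) (by omega) t).1]; ring
    · rw [Function.iterate_succ_apply, Dop_fs α lam φ ν hα hlam,
        Dop_iter_lin α lam k _ _ _ _ (contDiff_fs φ ν (l - 2)) (contDiff_fc φ ν (l - 1))]
      beta_reduce
      rcases Nat.eq_zero_or_pos l with rfl | hpos
      · norm_num
      · rw [(IH (l - 1) (by omega) t).1]
        rcases Nat.lt_or_ge l 2 with h2 | h2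
        · interval_cases l <;> norm_num
        · rw [(IH (l - 2) (by omega) t).2]; ring

lemma Eul_congr (α lam : ℝ) {u w : ℝ → ℝ} (h : EqOn u w (Ioi 0)) :
    EqOn (Eul α lam u) (Eul α lam w) (Ioi 0) := by
  intro x hx
  have hmem : Ioi (0 : ℝ) ∈ nhds x := isOpen_Ioi.mem_nhds hx
  have he : u =ᶠ[nhds x] w := Filter.eventuallyEq_of_mem hmem h
  simp only [Eul]
  rw [he.deriv_eq, he.deriv.deriv_eq, h hx]

lemma Eul_iter_congr (α lam : ℝ) (k : ℕ) {u w : ℝ → ℝ} (h : EqOn u w (Ioi 0)) :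
    EqOn ((Eul α lam)^[k] u) ((Eul α lam)^[k] w) (Ioi 0) := by
  induction k with
  | zero => exact h
  | succ k IH =>
    intro x hx
    rw [Function.iterate_succ_apply', Function.iterate_succ_apply']
    exact Eul_congr α lam IH hx

lemma Eul_log (α lam : ℝ) (v : ℝ → ℝ) (hv : ContDiff ℝ (⊤ : ℕ∞) v) :
    EqOn (Eul α lam (fun y => v (Real.log y)))
      (fun y => Dop α lam v (Real.log y)) (Ioi 0) := by
  have hv1 : Differentiable ℝ v := hv.differentiable (by norm_num)
  have hv' : ContDiff ℝ (⊤ : ℕ∞) (deriv v) := (contDiff_infty_iff_deriv.mp hv).2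
  have hv'1 : Differentiable ℝ (deriv v) := hv'.differentiable (by norm_num)
  have hd1 : ∀ y : ℝ, y ≠ 0 →
      HasDerivAt (fun y => v (Real.log y)) (deriv v (Real.log y) * y⁻¹) y := fun y hy =>
    (hv1 (Real.log y)).hasDerivAt.comp y (Real.hasDerivAt_log hy)
  intro x hx
  have hxne : x ≠ 0 := ne_of_gt hx
  have hev : deriv (fun y => v (Real.log y)) =ᶠ[nhds x] fun y => deriv v (Real.log y) * y⁻¹ := by
    filter_upwards [compl_singleton_mem_nhds hxne] with y hy
    exact (hd1 y hy).deriv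
  have h2 : HasDerivAt (fun y => deriv v (Real.log y) * y⁻¹)
      (deriv (deriv v) (Real.log x) * x⁻¹ * x⁻¹ + deriv v (Real.log x) * (-(x ^ 2)⁻¹)) x :=
    ((hv'1 (Real.log x)).hasDerivAt.comp x (Real.hasDerivAt_log hxne)).mul (hasDerivAt_inv hxne)
  have h3 : deriv (deriv (fun y => v (Real.log y))) x
      = deriv (deriv v) (Real.log x) * x⁻¹ * x⁻¹ + deriv v (Real.log x) * (-(x ^ 2)⁻¹) := by
    rw [hev.deriv_eq]; exact h2.deriv
  simp only [Eul, Dop]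
  rw [h3, (hd1 x hxne).deriv]
  field_simp
  ring

lemma Eul_log_iter (α lam : ℝ) (k : ℕ) :
    ∀ v : ℝ → ℝ, ContDiff ℝ (⊤ : ℕ∞) v →
      EqOn ((Eul α lam)^[k] (fun y => v (Real.log y)))
        (fun y => (Dop α lam)^[k] v (Real.log y)) (Ioi 0) := by
  induction k with
  | zero => intro v hv x hx; rfl
  | succ k IH =>
    intro v hv x hx
    rw [Function.iterate_succ_apply']
    calc Eul α lam ((Eul α lam)^[k] (fun y => v (Real.log y))) x
        = Eul α lam (fun y => (Dop α lam)^[k] v (Real.log y)) x :=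
          Eul_congr α lam (IH v hv) hx
      _ = Dop α lam ((Dop α lam)^[k] v) (Real.log x) :=
          Eul_log α lam _ (Dop_iter_contDiff α lam k hv) hx
      _ = (Dop α lam)^[k + 1] v (Real.log x) := by rw [Function.iterate_succ_apply']

theorem stmt5 (α lam : ℝ) (φ : ℝ) (hφ : φ = (α - 1) / 2) (h : lam - φ ^ 2 > 0)
    (ν : ℝ) (hν : ν = Real.sqrt (lam - φ ^ 2))
    (k : ℕ) (hk : 1 ≤ k) (l : ℕ) (hl : l ≤ k - 1) :
    (∀ x : ℝ, 0 < x →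
        (Eul α lam)^[k]
          (fun y => y ^ (-φ) * Real.cos (ν * Real.log y) * Real.log y ^ l) x = 0) ∧
    (∀ x : ℝ, 0 < x →
        (Eul α lam)^[k]
          (fun y => y ^ (-φ) * Real.sin (ν * Real.log y) * Real.log y ^ l) x = 0) := by
  have hα : α = 2 * φ + 1 := by rw [hφ]; ring
  have hν2 : ν ^ 2 = lam - φ ^ 2 := by rw [hν]; exact Real.sq_sqrt h.le
  have hlam : lam = φ ^ 2 + ν ^ 2 := by linarith
  have hlk : l < k := by omega
  constructor
  · intro x hx
    have heq : EqOn (fun y : ℝ => y ^ (-φ) * Real.cos (ν * Real.log y) * Real.log y ^ l)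
        (fun y => fc φ ν l (Real.log y)) (Ioi 0) := by
      intro y hy
      simp only [fc]
      rw [Real.rpow_def_of_pos hy, mul_comm (Real.log y) (-φ)]
    calc (Eul α lam)^[k]
          (fun y => y ^ (-φ) * Real.cos (ν * Real.log y) * Real.log y ^ l) x
        = (Eul α lam)^[k] (fun y => fc φ ν l (Real.log y)) x :=
          Eul_iter_congr α lam k heq hx
      _ = (Dop α lam)^[k] (fc φ ν l) (Real.log x) :=
          Eul_log_iter α lam k (fc φ ν l) (contDiff_fc φ ν l) hx
      _ = 0 := (key α lam φ ν hα hlam k l hlk (Real.log x)).1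
  · intro x hx
    have heq : EqOn (fun y : ℝ => y ^ (-φ) * Real.sin (ν * Real.log y) * Real.log y ^ l)
        (fun y => fs φ ν l (Real.log y)) (Ioi 0) := by
      intro y hy
      simp only [fs]
      rw [Real.rpow_def_of_pos hy, mul_comm (Real.log y) (-φ)]
    calc (Eul α lam)^[k]
          (fun y => y ^ (-φ) * Real.sin (ν * Real.log y) * Real.log y ^ l) x
        = (Eul α lam)^[k] (fun y => fs φ ν l (Real.log y)) x :=
          Eul_iter_congr α lam k heq hx
      _ = (Dop α lam)^[k] (fs φ ν l) (Real.log x) :=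
          Eul_log_iter α lam k (fs φ ν l) (contDiff_fs φ ν l) hx
      _ = 0 := (key α lam φ ν hα hlam k l hlk (Real.log x)).2
end
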